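/- Let a⁻ = (a₁⁻, a₂⁻, a₃⁻, a₄⁻). For every r ∈ ℛ⁻ with r > 0 and every t ∈ [0, 1], h_r(t; a⁻) ≥ 0; and for every r ∈ ℛ⁺ and every t ∈ [0, 1], h_r(t; a⁻) ≤ 0. -/

import Mathlib

noncomputable section

open Real Filter

/-- Rankin's auxiliary function `h_r(t; a) = t^r − a₁t − a₂t² − a₃t³ − a₄t⁴`,
where `t ^ r` is the real power. -/
def hfun (r a₁ a₂ a₃ a₄ t : ℝ) : ℝ :=
  t ^ r - a₁ * t - a₂ * t ^ 2 - a₃ * t ^ 3 - a₄ * t ^ 4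

def P1m (r κ η : ℝ) : ℝ := ((4 - r) * κ + (r - 2) * η) * κ ^ (r - 1) * η ^ 2

def P2m (r κ η : ℝ) : ℝ :=
  ((2 * r - 8) * κ ^ 2 + (1 - r) * κ * η + (1 - r) * η ^ 2) * κ ^ (r - 2) * η

def P3m (r κ η : ℝ) : ℝ :=
  ((4 - r) * κ ^ 2 + (4 - r) * κ * η + 2 * (r - 1) * η ^ 2) * κ ^ (r - 2)

def P4m (r κ η : ℝ) : ℝ := ((r - 3) * κ + (1 - r) * η) * κ ^ (r - 2)

/-- `κ₋ = 1/4`. -/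
def κm : ℝ := 1 / 4

/-- `η₋ = 3/4`. -/
def ηm : ℝ := 3 / 4

def a1m (r : ℝ) : ℝ := (P1m r κm ηm - P1m r ηm κm) / (κm - ηm) ^ 3

def a2m (r : ℝ) : ℝ := (P2m r κm ηm - P2m r ηm κm) / (κm - ηm) ^ 3

def a3m (r : ℝ) : ℝ := (P3m r κm ηm - P3m r ηm κm) / (κm - ηm) ^ 3

def a4m (r : ℝ) : ℝ := (P4m r κm ηm - P4m r ηm κm) / (κm - ηm) ^ 3

/-- `ℛ⁻ = (0,1] ∪ [2,3] ∪ [4,∞)`. -/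
def Rminus : Set ℝ := Set.Ioc 0 1 ∪ Set.Icc 2 3 ∪ Set.Ici 4

/-- `ℛ⁺ = [1,2] ∪ [3,4]`. -/
def Rplus : Set ℝ := Set.Icc 1 2 ∪ Set.Icc 3 4

namespace RankinAux

/-! ### A Rolle chain for `g(t) − λ(t−1/4)²(t−3/4)²` where `g(t) = t^(r−1) − cubic`. -/

def F0 (r a₁ a₂ a₃ a₄ lam t : ℝ) : ℝ :=
  t ^ (r-1) - (a₁ + a₂*t + a₃*t^2 + a₄*t^3 + lam*((t-1/4)^2*(t-3/4)^2))

def F1 (r a₂ a₃ a₄ lam t : ℝ) : ℝ :=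
  (r-1)*t^(r-2) - (a₂ + 2*a₃*t + 3*a₄*t^2 + lam*(2*(t-1/4)*(t-3/4)^2 + 2*(t-1/4)^2*(t-3/4)))

def F2 (r a₃ a₄ lam t : ℝ) : ℝ :=
  (r-1)*((r-2)*t^(r-3)) - (2*a₃ + 6*a₄*t + lam*(2*(t-3/4)^2 + 8*(t-1/4)*(t-3/4) + 2*(t-1/4)^2))

def F3 (r a₄ lam t : ℝ) : ℝ :=
  (r-1)*((r-2)*((r-3)*t^(r-4))) - (6*a₄ + lam*(24*t - 12))

def F4 (r lam t : ℝ) : ℝ :=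
  (r-1)*((r-2)*((r-3)*((r-4)*t^(r-5)))) - lam*24

lemma hasDerivAt_F0 (r a₁ a₂ a₃ a₄ lam t : ℝ) (ht : 0 < t) :
    HasDerivAt (F0 r a₁ a₂ a₃ a₄ lam) (F1 r a₂ a₃ a₄ lam t) t := by
  have h1 : HasDerivAt (fun s : ℝ => s ^ (r-1)) ((r-1)*t^(r-2)) t := by
    have := Real.hasDerivAt_rpow_const (x := t) (p := r-1) (Or.inl ht.ne')
    rwa [show r-1-1 = r-2 by ring] at this
  have hid := hasDerivAt_id t
  have q1 : HasDerivAt (fun s : ℝ => (s-1/4)^2) (2*(t-1/4)) t := by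
    simpa using! (hid.sub_const ((1:ℝ)/4)).pow 2
  have q2 : HasDerivAt (fun s : ℝ => (s-3/4)^2) (2*(t-3/4)) t := by
    simpa using! (hid.sub_const (3/4)).pow 2
  have p1 : HasDerivAt (fun s : ℝ => (s-1/4)^2*(s-3/4)^2)
      (2*(t-1/4)*(t-3/4)^2 + 2*(t-1/4)^2*(t-3/4)) t := by
    have := q1.mul q2
    convert! this using 1; push_cast [id_eq]; ring
  have q3 : HasDerivAt (fun s : ℝ => a₂*s) a₂ t := by simpa using hid.const_mul a₂
  have q4 : HasDerivAt (fun s : ℝ => a₃*s^2) (2*a₃*t) t := by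
    have := (hasDerivAt_pow 2 t).const_mul a₃
    convert! this using 1; push_cast [id_eq]; ring
  have q5 : HasDerivAt (fun s : ℝ => a₄*s^3) (3*a₄*t^2) t := by
    have := (hasDerivAt_pow 3 t).const_mul a₄
    convert! this using 1; push_cast [id_eq]; ring
  have h2 : HasDerivAt (fun s : ℝ => a₁ + a₂*s + a₃*s^2 + a₄*s^3 + lam*((s-1/4)^2*(s-3/4)^2))
      (a₂ + 2*a₃*t + 3*a₄*t^2 + lam*(2*(t-1/4)*(t-3/4)^2 + 2*(t-1/4)^2*(t-3/4))) t := by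
    have := (((((hasDerivAt_const t a₁).add q3).add q4).add q5).add (p1.const_mul lam))
    convert! this using 1; push_cast [id_eq]; ring
  exact h1.sub h2

lemma hasDerivAt_F1 (r a₂ a₃ a₄ lam t : ℝ) (ht : 0 < t) :
    HasDerivAt (F1 r a₂ a₃ a₄ lam) (F2 r a₃ a₄ lam t) t := by
  have h1 : HasDerivAt (fun s : ℝ => (r-1)*s^(r-2)) ((r-1)*((r-2)*t^(r-3))) t := by
    have := (Real.hasDerivAt_rpow_const (x := t) (p := r-2) (Or.inl ht.ne')).const_mul (r-1)
    rwa [show r-2-1 = r-3 by ring] at this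
  have hid := hasDerivAt_id t
  have q3 : HasDerivAt (fun s : ℝ => 2*a₃*s) (2*a₃) t := by simpa using hid.const_mul (2*a₃)
  have q4 : HasDerivAt (fun s : ℝ => 3*a₄*s^2) (6*a₄*t) t := by
    have := (hasDerivAt_pow 2 t).const_mul (3*a₄)
    convert! this using 1; push_cast [id_eq]; ring
  have q1 : HasDerivAt (fun s : ℝ => (s-1/4)^2) (2*(t-1/4)) t := by
    simpa using! (hid.sub_const ((1:ℝ)/4)).pow 2
  have q2 : HasDerivAt (fun s : ℝ => (s-3/4)^2) (2*(t-3/4)) t := by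
    simpa using! (hid.sub_const (3/4)).pow 2
  have r1 : HasDerivAt (fun s : ℝ => 2*(s-1/4)*(s-3/4)^2)
      (2*(t-3/4)^2 + 4*(t-1/4)*(t-3/4)) t := by
    have := (((hid.sub_const (1/4)).const_mul 2).mul q2)
    convert! this using 1; push_cast [id_eq]; ring
  have r2 : HasDerivAt (fun s : ℝ => 2*(s-1/4)^2*(s-3/4))
      (4*(t-1/4)*(t-3/4) + 2*(t-1/4)^2) t := by
    have := ((q1.const_mul 2).mul (hid.sub_const (3/4)))
    convert! this using 1; push_cast [id_eq]; ring
  have p : HasDerivAt (fun s : ℝ => a₂ + 2*a₃*s + 3*a₄*s^2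
      + lam*(2*(s-1/4)*(s-3/4)^2 + 2*(s-1/4)^2*(s-3/4)))
      (2*a₃ + 6*a₄*t + lam*(2*(t-3/4)^2 + 8*(t-1/4)*(t-3/4) + 2*(t-1/4)^2)) t := by
    have := ((((hasDerivAt_const t a₂).add q3).add q4).add ((r1.add r2).const_mul lam))
    convert! this using 1; push_cast [id_eq]; ring
  exact h1.sub p

lemma hasDerivAt_F2 (r a₃ a₄ lam t : ℝ) (ht : 0 < t) :
    HasDerivAt (F2 r a₃ a₄ lam) (F3 r a₄ lam t) t := by
  have h1 : HasDerivAt (fun s : ℝ => (r-1)*((r-2)*s^(r-3)))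
      ((r-1)*((r-2)*((r-3)*t^(r-4)))) t := by
    have := ((Real.hasDerivAt_rpow_const (x := t) (p := r-3) (Or.inl ht.ne')).const_mul
      (r-2)).const_mul (r-1)
    rwa [show r-3-1 = r-4 by ring] at this
  have hid := hasDerivAt_id t
  have q1 : HasDerivAt (fun s : ℝ => (s-1/4)^2) (2*(t-1/4)) t := by
    simpa using! (hid.sub_const ((1:ℝ)/4)).pow 2
  have q2 : HasDerivAt (fun s : ℝ => (s-3/4)^2) (2*(t-3/4)) t := by
    simpa using! (hid.sub_const (3/4)).pow 2
  have q4 : HasDerivAt (fun s : ℝ => 6*a₄*s) (6*a₄) t := by simpa using hid.const_mul (6*a₄)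
  have r1 : HasDerivAt (fun s : ℝ => 8*(s-1/4)*(s-3/4)) (8*(t-3/4) + 8*(t-1/4)) t := by
    have := (((hid.sub_const (1/4)).const_mul 8).mul (hid.sub_const (3/4)))
    convert! this using 1; push_cast [id_eq]; ring
  have p : HasDerivAt (fun s : ℝ => 2*a₃ + 6*a₄*s
      + lam*(2*(s-3/4)^2 + 8*(s-1/4)*(s-3/4) + 2*(s-1/4)^2))
      (6*a₄ + lam*(24*t - 12)) t := by
    have := (((hasDerivAt_const t (2*a₃)).add q4).add
      ((((q2.const_mul 2).add r1).add (q1.const_mul 2)).const_mul lam))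
    convert! this using 1; push_cast [id_eq]; ring
  exact h1.sub p

lemma hasDerivAt_F3 (r a₄ lam t : ℝ) (ht : 0 < t) :
    HasDerivAt (F3 r a₄ lam) (F4 r lam t) t := by
  have h1 : HasDerivAt (fun s : ℝ => (r-1)*((r-2)*((r-3)*s^(r-4))))
      ((r-1)*((r-2)*((r-3)*((r-4)*t^(r-5))))) t := by
    have := (((Real.hasDerivAt_rpow_const (x := t) (p := r-4) (Or.inl ht.ne')).const_mul
      (r-3)).const_mul (r-2)).const_mul (r-1)
    rwa [show r-4-1 = r-5 by ring] at this
  have hid := hasDerivAt_id t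
  have p : HasDerivAt (fun s : ℝ => 6*a₄ + lam*(24*s - 12)) (lam*24) t := by
    have := (hasDerivAt_const t (6*a₄)).add (((hid.const_mul 24).sub_const 12).const_mul lam)
    convert! this using 1; push_cast [id_eq]; ring
  exact h1.sub p

/-! ### Rolle on `(0, ∞)` -/

lemma myRolle (f f' : ℝ → ℝ) (hf : ∀ x, 0 < x → HasDerivAt f (f' x) x)
    (a b : ℝ) (ha : 0 < a) (hab : a < b) (heq : f a = f b) :
    ∃ c, a < c ∧ c < b ∧ f' c = 0 := by
  have hc : ContinuousOn f (Set.Icc a b) := fun x hx =>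
    ((hf x (lt_of_lt_of_le ha hx.1)).continuousAt).continuousWithinAt
  obtain ⟨c, hc1, hc2⟩ := exists_hasDerivAt_eq_zero hab hc heq
    (fun x hx => hf x (ha.trans hx.1))
  exact ⟨c, hc1.1, hc1.2, hc2⟩

lemma descend4 (f f' : ℝ → ℝ) (hf : ∀ x, 0 < x → HasDerivAt f (f' x) x)
    {p1 p2 p3 p4 : ℝ} (h0 : 0 < p1) (h12 : p1 < p2) (h23 : p2 < p3) (h34 : p3 < p4)
    (z1 : f p1 = 0) (z2 : f p2 = 0) (z3 : f p3 = 0) (z4 : f p4 = 0) :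
    ∃ q1 q2 q3, 0 < q1 ∧ q1 < q2 ∧ q2 < q3 ∧ f' q1 = 0 ∧ f' q2 = 0 ∧ f' q3 = 0 := by
  obtain ⟨q1, hq1a, hq1b, hq1⟩ := myRolle f f' hf p1 p2 h0 h12 (by rw [z1, z2])
  obtain ⟨q2, hq2a, hq2b, hq2⟩ := myRolle f f' hf p2 p3 (h0.trans h12) h23 (by rw [z2, z3])
  obtain ⟨q3, hq3a, hq3b, hq3⟩ := myRolle f f' hf p3 p4 ((h0.trans h12).trans h23) h34
    (by rw [z3, z4])
  exact ⟨q1, q2, q3, h0.trans hq1a, hq1b.trans hq2a, hq2b.trans hq3a, hq1, hq2, hq3⟩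

lemma descend3 (f f' : ℝ → ℝ) (hf : ∀ x, 0 < x → HasDerivAt f (f' x) x)
    {p1 p2 p3 : ℝ} (h0 : 0 < p1) (h12 : p1 < p2) (h23 : p2 < p3)
    (z1 : f p1 = 0) (z2 : f p2 = 0) (z3 : f p3 = 0) :
    ∃ q1 q2, 0 < q1 ∧ q1 < q2 ∧ f' q1 = 0 ∧ f' q2 = 0 := by
  obtain ⟨q1, hq1a, hq1b, hq1⟩ := myRolle f f' hf p1 p2 h0 h12 (by rw [z1, z2])
  obtain ⟨q2, hq2a, hq2b, hq2⟩ := myRolle f f' hf p2 p3 (h0.trans h12) h23 (by rw [z2, z3])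
  exact ⟨q1, q2, h0.trans hq1a, hq1b.trans hq2a, hq1, hq2⟩

lemma descend2 (f f' : ℝ → ℝ) (hf : ∀ x, 0 < x → HasDerivAt f (f' x) x)
    {p1 p2 : ℝ} (h0 : 0 < p1) (h12 : p1 < p2) (z1 : f p1 = 0) (z2 : f p2 = 0) :
    ∃ q1, 0 < q1 ∧ f' q1 = 0 := by
  obtain ⟨q1, hq1a, _, hq1⟩ := myRolle f f' hf p1 p2 h0 h12 (by rw [z1, z2])
  exact ⟨q1, h0.trans hq1a, hq1⟩

/-! ### Hermite interpolation identities for the coefficients `a_j⁻` -/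

lemma quarter_rpow (r : ℝ) : (1/4 : ℝ) ^ (r - 2) = 4 * (1/4 : ℝ) ^ (r-1) := by
  rw [show r - 2 = (r-1) - 1 by ring, Real.rpow_sub (by norm_num : (0:ℝ) < 1/4),
    Real.rpow_one]
  ring

lemma threequarter_rpow (r : ℝ) : (3/4 : ℝ) ^ (r - 2) = (4/3) * (3/4 : ℝ) ^ (r-1) := by
  rw [show r - 2 = (r-1) - 1 by ring, Real.rpow_sub (by norm_num : (0:ℝ) < 3/4),
    Real.rpow_one]
  ring

lemma hermite_k (r : ℝ) :
    (1/4 : ℝ) ^ (r-1) = a1m r + a2m r * (1/4) + a3m r * (1/4:ℝ)^2 + a4m r * (1/4:ℝ)^3 := by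
  simp only [a1m, a2m, a3m, a4m, P1m, P2m, P3m, P4m, κm, ηm]
  rw [quarter_rpow, threequarter_rpow]
  ring

lemma hermite_e (r : ℝ) :
    (3/4 : ℝ) ^ (r-1) = a1m r + a2m r * (3/4) + a3m r * (3/4:ℝ)^2 + a4m r * (3/4:ℝ)^3 := by
  simp only [a1m, a2m, a3m, a4m, P1m, P2m, P3m, P4m, κm, ηm]
  rw [quarter_rpow, threequarter_rpow]
  ring

lemma hermite_k' (r : ℝ) :
    (r-1) * (1/4 : ℝ) ^ (r-2) = a2m r + 2 * a3m r * (1/4) + 3 * a4m r * (1/4:ℝ)^2 := by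
  simp only [a1m, a2m, a3m, a4m, P1m, P2m, P3m, P4m, κm, ηm]
  rw [quarter_rpow, threequarter_rpow]
  ring

lemma hermite_e' (r : ℝ) :
    (r-1) * (3/4 : ℝ) ^ (r-2) = a2m r + 2 * a3m r * (3/4) + 3 * a4m r * (3/4:ℝ)^2 := by
  simp only [a1m, a2m, a3m, a4m, P1m, P2m, P3m, P4m, κm, ηm]
  rw [quarter_rpow, threequarter_rpow]
  ring

/-! ### The key Rolle-chain lemma -/

lemma key (r a₁ a₂ a₃ a₄ lam t₀ : ℝ) (ht₀ : 0 < t₀) (hne1 : t₀ ≠ 1/4) (hne2 : t₀ ≠ 3/4)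
    (hgk : (1/4 : ℝ) ^ (r-1) = a₁ + a₂ * (1/4) + a₃ * (1/4:ℝ)^2 + a₄ * (1/4:ℝ)^3)
    (hge : (3/4 : ℝ) ^ (r-1) = a₁ + a₂ * (3/4) + a₃ * (3/4:ℝ)^2 + a₄ * (3/4:ℝ)^3)
    (hgk' : (r-1) * (1/4 : ℝ) ^ (r-2) = a₂ + 2 * a₃ * (1/4) + 3 * a₄ * (1/4:ℝ)^2)
    (hge' : (r-1) * (3/4 : ℝ) ^ (r-2) = a₂ + 2 * a₃ * (3/4) + 3 * a₄ * (3/4:ℝ)^2)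
    (hlam : t₀ ^ (r-1) = a₁ + a₂*t₀ + a₃*t₀^2 + a₄*t₀^3 + lam*((t₀-1/4)^2*(t₀-3/4)^2)) :
    ∃ ξ, 0 < ξ ∧ (r-1)*(r-2)*(r-3)*(r-4)*ξ^(r-5) = 24*lam := by
  have e0 : F0 r a₁ a₂ a₃ a₄ lam t₀ = 0 := by unfold F0; rw [hlam]; ring
  have ek : F0 r a₁ a₂ a₃ a₄ lam (1/4) = 0 := by unfold F0; rw [hgk]; ring
  have ee : F0 r a₁ a₂ a₃ a₄ lam (3/4) = 0 := by unfold F0; rw [hge]; ring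
  have e1k : F1 r a₂ a₃ a₄ lam (1/4) = 0 := by unfold F1; rw [hgk']; ring
  have e1e : F1 r a₂ a₃ a₄ lam (3/4) = 0 := by unfold F1; rw [hge']; ring
  have hD0 : ∀ x, 0 < x → HasDerivAt (F0 r a₁ a₂ a₃ a₄ lam) (F1 r a₂ a₃ a₄ lam x) x :=
    fun x hx => hasDerivAt_F0 r a₁ a₂ a₃ a₄ lam x hx
  obtain ⟨p1, p2, p3, p4, hp1, h12, h23, h34, hz1, hz2, hz3, hz4⟩ :
      ∃ p1 p2 p3 p4, 0 < p1 ∧ p1 < p2 ∧ p2 < p3 ∧ p3 < p4 ∧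
        F1 r a₂ a₃ a₄ lam p1 = 0 ∧ F1 r a₂ a₃ a₄ lam p2 = 0 ∧
        F1 r a₂ a₃ a₄ lam p3 = 0 ∧ F1 r a₂ a₃ a₄ lam p4 = 0 := by
    rcases lt_trichotomy t₀ (1/4) with hc | hc | hc
    · obtain ⟨z1, hz1a, hz1b, hz1'⟩ := myRolle _ _ hD0 t₀ (1/4) ht₀ hc (e0.trans ek.symm)
      obtain ⟨z2, hz2a, hz2b, hz2'⟩ := myRolle _ _ hD0 (1/4) (3/4) (by norm_num)
        (by norm_num) (ek.trans ee.symm)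
      exact ⟨z1, 1/4, z2, 3/4, ht₀.trans hz1a, hz1b, hz2a, hz2b, hz1', e1k, hz2', e1e⟩
    · exact absurd hc hne1
    · rcases lt_trichotomy t₀ (3/4) with hc' | hc' | hc'
      · obtain ⟨z1, hz1a, hz1b, hz1'⟩ := myRolle _ _ hD0 (1/4) t₀ (by norm_num) hc
          (ek.trans e0.symm)
        obtain ⟨z2, hz2a, hz2b, hz2'⟩ := myRolle _ _ hD0 t₀ (3/4) ht₀ hc'
          (e0.trans ee.symm)
        exact ⟨1/4, z1, z2, 3/4, by norm_num, hz1a, hz1b.trans hz2a, hz2b,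
          e1k, hz1', hz2', e1e⟩
      · exact absurd hc' hne2
      · obtain ⟨z1, hz1a, hz1b, hz1'⟩ := myRolle _ _ hD0 (1/4) (3/4) (by norm_num)
          (by norm_num) (ek.trans ee.symm)
        obtain ⟨z2, hz2a, hz2b, hz2'⟩ := myRolle _ _ hD0 (3/4) t₀ (by norm_num) hc'
          (ee.trans e0.symm)
        exact ⟨1/4, z1, 3/4, z2, by norm_num, hz1a, hz1b, hz2a, e1k, hz1', e1e, hz2'⟩
  obtain ⟨q1, q2, q3, hq1, hq12, hq23, hw1, hw2, hw3⟩ :=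
    descend4 _ _ (fun x hx => hasDerivAt_F1 r a₂ a₃ a₄ lam x hx)
      hp1 h12 h23 h34 hz1 hz2 hz3 hz4
  obtain ⟨w1, w2, hw1p, hw12, hv1, hv2⟩ :=
    descend3 _ _ (fun x hx => hasDerivAt_F2 r a₃ a₄ lam x hx) hq1 hq12 hq23 hw1 hw2 hw3
  obtain ⟨ξ, hξp, hξ⟩ :=
    descend2 _ _ (fun x hx => hasDerivAt_F3 r a₄ lam x hx) hw1p hw12 hv1 hv2
  refine ⟨ξ, hξp, ?_⟩
  unfold F4 at hξ
  linear_combination hξ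

/-! ### Sign of `(r−1)(r−2)(r−3)(r−4)` on `ℛ∓` -/

lemma C_nonneg {r : ℝ} (h : r ∈ Rminus) : 0 ≤ (r-1)*(r-2)*(r-3)*(r-4) := by
  simp only [Rminus, Set.mem_union, Set.mem_Ioc, Set.mem_Icc, Set.mem_Ici] at h
  rcases h with (⟨h0, h1⟩ | ⟨h2, h3⟩) | h4
  · nlinarith [mul_nonneg (mul_nonneg (mul_nonneg (by linarith : (0:ℝ) ≤ 1 - r)
      (by linarith : (0:ℝ) ≤ 2 - r)) (by linarith : (0:ℝ) ≤ 3 - r))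
      (by linarith : (0:ℝ) ≤ 4 - r)]
  · nlinarith [mul_nonneg (mul_nonneg (mul_nonneg (by linarith : (0:ℝ) ≤ r - 1)
      (by linarith : (0:ℝ) ≤ r - 2)) (by linarith : (0:ℝ) ≤ 3 - r))
      (by linarith : (0:ℝ) ≤ 4 - r)]
  · nlinarith [mul_nonneg (mul_nonneg (mul_nonneg (by linarith : (0:ℝ) ≤ r - 1)
      (by linarith : (0:ℝ) ≤ r - 2)) (by linarith : (0:ℝ) ≤ r - 3))
      (by linarith : (0:ℝ) ≤ r - 4)]

lemma C_nonpos {r : ℝ} (h : r ∈ Rplus) : (r-1)*(r-2)*(r-3)*(r-4) ≤ 0 := by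
  simp only [Rplus, Set.mem_union, Set.mem_Icc] at h
  rcases h with ⟨h1, h2⟩ | ⟨h3, h4⟩
  · nlinarith [mul_nonneg (mul_nonneg (mul_nonneg (by linarith : (0:ℝ) ≤ r - 1)
      (by linarith : (0:ℝ) ≤ 2 - r)) (by linarith : (0:ℝ) ≤ 3 - r))
      (by linarith : (0:ℝ) ≤ 4 - r)]
  · nlinarith [mul_nonneg (mul_nonneg (mul_nonneg (by linarith : (0:ℝ) ≤ r - 1)
      (by linarith : (0:ℝ) ≤ r - 2)) (by linarith : (0:ℝ) ≤ r - 3))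
      (by linarith : (0:ℝ) ≤ 4 - r)]

lemma Rplus_pos {r : ℝ} (h : r ∈ Rplus) : 0 < r := by
  simp only [Rplus, Set.mem_union, Set.mem_Icc] at h
  rcases h with ⟨h1, _⟩ | ⟨h1, _⟩ <;> linarith

end RankinAux

/-- For `r ∈ ℛ⁻` (so in particular `r > 0`) the function `h_r(·; a⁻)` is nonnegative on
`[0,1]`, while for `r ∈ ℛ⁺` it is nonpositive on `[0,1]`. -/
theorem hfun_sign_minus_coeffs (r t : ℝ) (ht : t ∈ Set.Icc (0 : ℝ) 1) :
    (r ∈ Rminus → 0 < r → 0 ≤ hfun r (a1m r) (a2m r) (a3m r) (a4m r) t) ∧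
    (r ∈ Rplus → hfun r (a1m r) (a2m r) (a3m r) (a4m r) t ≤ 0) := by
  obtain ⟨ht0, _ht1⟩ := ht
  constructor
  · intro hR hr
    rcases eq_or_lt_of_le ht0 with h0 | h0
    · rw [← h0]
      simp [hfun, Real.zero_rpow hr.ne']
    · have key0 : 0 ≤ t^(r-1) - (a1m r + a2m r * t + a3m r * t^2 + a4m r * t^3) := by
        by_contra hneg
        push_neg at hneg
        have hk4 : t ≠ 1/4 := by
          rintro rfl
          have := RankinAux.hermite_k r
          linarith
        have hk34 : t ≠ 3/4 := by
          rintro rfl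
          have := RankinAux.hermite_e r
          linarith
        have hDpos : 0 < (t-1/4)^2*(t-3/4)^2 := by
          have h14 : t - 1/4 ≠ 0 := sub_ne_zero.mpr hk4
          have h34' : t - 3/4 ≠ 0 := sub_ne_zero.mpr hk34
          positivity
        set lam : ℝ :=
          (t^(r-1) - (a1m r + a2m r * t + a3m r * t^2 + a4m r * t^3)) /
            ((t-1/4)^2*(t-3/4)^2) with hlamdef
        have hlamneg : lam < 0 := div_neg_of_neg_of_pos hneg hDpos
        have hmul : lam * ((t-1/4)^2*(t-3/4)^2)
            = t^(r-1) - (a1m r + a2m r * t + a3m r * t^2 + a4m r * t^3) :=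
          div_mul_cancel₀ _ hDpos.ne'
        have hlam : t ^ (r-1) = a1m r + a2m r * t + a3m r * t^2 + a4m r * t^3
            + lam * ((t-1/4)^2*(t-3/4)^2) := by linarith
        obtain ⟨ξ, hξp, heq⟩ := RankinAux.key r (a1m r) (a2m r) (a3m r) (a4m r) lam t h0
          hk4 hk34 (RankinAux.hermite_k r) (RankinAux.hermite_e r)
          (RankinAux.hermite_k' r) (RankinAux.hermite_e' r) hlam
        have hC := RankinAux.C_nonneg hR
        have hpow : 0 < ξ ^ (r-5) := Real.rpow_pos_of_pos hξp _
        nlinarith [mul_nonneg hC hpow.le]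
      have hsub : t ^ (r-1) = t ^ r / t := by
        rw [Real.rpow_sub h0, Real.rpow_one]
      have hsplit : hfun r (a1m r) (a2m r) (a3m r) (a4m r) t
          = t * (t^(r-1) - (a1m r + a2m r * t + a3m r * t^2 + a4m r * t^3)) := by
        unfold hfun
        rw [hsub]
        field_simp
        ring
      rw [hsplit]
      exact mul_nonneg h0.le key0
  · intro hR
    have hr : 0 < r := RankinAux.Rplus_pos hR
    rcases eq_or_lt_of_le ht0 with h0 | h0
    · rw [← h0]
      simp [hfun, Real.zero_rpow hr.ne']
    · have key0 : t^(r-1) - (a1m r + a2m r * t + a3m r * t^2 + a4m r * t^3) ≤ 0 := by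
        by_contra hneg
        push_neg at hneg
        have hk4 : t ≠ 1/4 := by
          rintro rfl
          have := RankinAux.hermite_k r
          linarith
        have hk34 : t ≠ 3/4 := by
          rintro rfl
          have := RankinAux.hermite_e r
          linarith
        have hDpos : 0 < (t-1/4)^2*(t-3/4)^2 := by
          have h14 : t - 1/4 ≠ 0 := sub_ne_zero.mpr hk4
          have h34' : t - 3/4 ≠ 0 := sub_ne_zero.mpr hk34
          positivity
        set lam : ℝ :=
          (t^(r-1) - (a1m r + a2m r * t + a3m r * t^2 + a4m r * t^3)) /
            ((t-1/4)^2*(t-3/4)^2) with hlamdef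
        have hlampos : 0 < lam := div_pos hneg hDpos
        have hmul : lam * ((t-1/4)^2*(t-3/4)^2)
            = t^(r-1) - (a1m r + a2m r * t + a3m r * t^2 + a4m r * t^3) :=
          div_mul_cancel₀ _ hDpos.ne'
        have hlam : t ^ (r-1) = a1m r + a2m r * t + a3m r * t^2 + a4m r * t^3
            + lam * ((t-1/4)^2*(t-3/4)^2) := by linarith
        obtain ⟨ξ, hξp, heq⟩ := RankinAux.key r (a1m r) (a2m r) (a3m r) (a4m r) lam t h0
          hk4 hk34 (RankinAux.hermite_k r) (RankinAux.hermite_e r)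
          (RankinAux.hermite_k' r) (RankinAux.hermite_e' r) hlam
        have hC := RankinAux.C_nonpos hR
        have hpow : 0 < ξ ^ (r-5) := Real.rpow_pos_of_pos hξp _
        nlinarith [mul_nonpos_of_nonpos_of_nonneg hC hpow.le]
      have hsub : t ^ (r-1) = t ^ r / t := by
        rw [Real.rpow_sub h0, Real.rpow_one]
      have hsplit : hfun r (a1m r) (a2m r) (a3m r) (a4m r) t
          = t * (t^(r-1) - (a1m r + a2m r * t + a3m r * t^2 + a4m r * t^3)) := by
        unfold hfun
        rw [hsub]
        field_simp
        ring
      rw [hsplit]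
      exact mul_nonpos_of_nonneg_of_nonpos h0.le key0
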